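/- arXiv:2306.00497 — 5 statements merged into one kernel-verified Lean document; each statement's English description precedes it below -/
import Mathlib

section
/- In the defiant case, the risk with recourse of the Bayes-optimal classifier satisfies R_Q(f*) = P(B=1, f*(X₀) = −1, Y = −1) − P(B=1, f*(X₀) = −1, Y = +1) + R_P(f*), and consequently R_Q(f*) ≥ R_P(f*), with strict inequality if P(B=1, f*(X₀) = −1) > 0 and P(Y=−1|X₀) > P(Y=+1|X₀) almost surely on {f* = −1}. -/
open Set MeasureTheory

/-- defiant case, Bayes-optimal classifier.  The data distribution on
features is `P`, `η x = P(Y=1|X₀=x)`, `r x = P(B=1|X₀=x)` and `f` is the Bayes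
classifier.  The risk with recourse equals
`P(B=1,f=-1,Y=-1) - P(B=1,f=-1,Y=+1) + R_P`, hence `R_Q ≥ R_P`, strictly when
`P(B=1,f=-1) > 0` and `P(Y=-1|X₀) > P(Y=+1|X₀)` a.s. on `{f = -1}`. -/
theorem stmt_2 {α : Type*} [MeasurableSpace α] (P : Measure α) [IsProbabilityMeasure P]
    (η r : α → ℝ) (f : α → ℤ)
    (hη : Measurable η) (hr : Measurable r) (hf : Measurable f)
    (hη01 : ∀ x, η x ∈ Set.Icc (0:ℝ) 1) (hr01 : ∀ x, r x ∈ Set.Icc (0:ℝ) 1)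
    (hBayes : ∀ x, f x = if (1:ℝ)/2 ≤ η x then 1 else -1)
    (RP RQ : ℝ)
    (hRP : RP = ∫ x, (if f x = 1 then 1 - η x else η x) ∂P)
    (hRQ : RQ = ∫ x, (if f x = 1 then 1 - η x
        else r x * (1 - η x) + (1 - r x) * η x) ∂P) :
    (RQ = (∫ x in {x | f x = -1}, r x * (1 - η x) ∂P)
          - (∫ x in {x | f x = -1}, r x * η x ∂P) + RP
      ∧ RP ≤ RQ)
    ∧ ((0 < ∫ x in {x | f x = -1}, r x ∂P) →
        (∀ᵐ x ∂P, f x = -1 → η x < 1/2) → RP < RQ) := by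
  have hfcases : ∀ x, f x = 1 ∨ f x = -1 := by
    intro x; rw [hBayes x]; split <;> simp
  set S := {x | f x = -1} with hSdef
  have hSm : MeasurableSet S := hf (measurableSet_singleton (-1))
  have hS1 : MeasurableSet {x | f x = 1} := hf (measurableSet_singleton 1)
  -- On S, η < 1/2
  have hSη : ∀ x ∈ S, η x < 1/2 := by
    intro x hx
    by_contra hc
    push_neg at hc
    have := hBayes x
    rw [if_pos hc] at this
    have : (1:ℤ) = -1 := this.symm.trans hx
    norm_num at this
  set g : α → ℝ := fun x => if f x = 1 then 1 - η x else η x with hgdef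
  set h : α → ℝ := fun x => if f x = 1 then 1 - η x
      else r x * (1 - η x) + (1 - r x) * η x with hhdef
  have hgm : Measurable g := Measurable.ite hS1 (measurable_const.sub hη) hη
  have hhm : Measurable h := Measurable.ite hS1 (measurable_const.sub hη)
    ((hr.mul (measurable_const.sub hη)).add ((measurable_const.sub hr).mul hη))
  have hbound : ∀ (u : α → ℝ), Measurable u → (∀ x, ‖u x‖ ≤ 2) → Integrable u P := by
    intro u hu hb
    exact ⟨hu.aestronglyMeasurable, HasFiniteIntegral.of_bounded (ae_of_all _ hb)⟩
  have habs : ∀ x, |η x| ≤ 1 ∧ |r x| ≤ 1 := by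
    intro x
    obtain ⟨h1, h2⟩ := hη01 x
    obtain ⟨h3, h4⟩ := hr01 x
    constructor <;> rw [abs_le] <;> constructor <;> linarith
  have hgi : Integrable g P := by
    apply hbound g hgm
    intro x
    obtain ⟨h1, h2⟩ := hη01 x
    simp only [hgdef, Real.norm_eq_abs]
    split <;> rw [abs_le] <;> constructor <;> linarith
  have hhi : Integrable h P := by
    apply hbound h hhm
    intro x
    obtain ⟨h1, h2⟩ := hη01 x
    obtain ⟨h3, h4⟩ := hr01 x
    simp only [hhdef, Real.norm_eq_abs]
    split <;> rw [abs_le] <;> constructor <;> nlinarith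
  have hi1 : Integrable (fun x => r x * (1 - η x)) P := by
    apply hbound _ (hr.mul (measurable_const.sub hη))
    intro x
    obtain ⟨h1, h2⟩ := hη01 x
    obtain ⟨h3, h4⟩ := hr01 x
    simp only [Pi.mul_apply, Pi.sub_apply]
    rw [Real.norm_eq_abs, abs_le]; constructor <;> nlinarith
  have hi2 : Integrable (fun x => r x * η x) P := by
    apply hbound _ (hr.mul hη)
    intro x
    obtain ⟨h1, h2⟩ := hη01 x
    obtain ⟨h3, h4⟩ := hr01 x
    simp only [Pi.mul_apply, Pi.sub_apply]
    rw [Real.norm_eq_abs, abs_le]; constructor <;> nlinarith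
  have hi3 : Integrable (fun x => r x * (1 - 2 * η x)) P := by
    apply hbound _ (hr.mul (measurable_const.sub (measurable_const.mul hη)))
    intro x
    obtain ⟨h1, h2⟩ := hη01 x
    obtain ⟨h3, h4⟩ := hr01 x
    simp only [Pi.mul_apply, Pi.sub_apply]
    rw [Real.norm_eq_abs, abs_le]; constructor <;> nlinarith
  have hptwise : ∀ x, h x - g x = S.indicator (fun x => r x * (1 - 2 * η x)) x := by
    intro x
    rcases hfcases x with h1 | h1
    · have hxS : x ∉ S := by simp [hSdef, h1]
      simp [hgdef, hhdef, h1, Set.indicator_of_notMem hxS]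
    · have hxS : x ∈ S := h1
      have hne : f x ≠ 1 := by rw [h1]; norm_num
      simp only [hgdef, hhdef, if_neg hne, Set.indicator_of_mem hxS]
      ring
  have key : RQ - RP = ∫ x in S, r x * (1 - 2 * η x) ∂P := by
    rw [hRQ, hRP, ← integral_sub hhi hgi, ← integral_indicator hSm]
    exact integral_congr_ae (ae_of_all _ hptwise)
  have hsplit : (∫ x in S, r x * (1 - 2 * η x) ∂P)
      = (∫ x in S, r x * (1 - η x) ∂P) - (∫ x in S, r x * η x ∂P) := by
    rw [← integral_sub (hi1.restrict) (hi2.restrict)]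
    apply integral_congr_ae (ae_of_all _ ?_)
    intro x; ring
  have hnonneg : 0 ≤ ∫ x in S, r x * (1 - 2 * η x) ∂P := by
    apply setIntegral_nonneg hSm
    intro x hx
    have := hSη x hx
    have := (hr01 x).1
    nlinarith
  refine ⟨⟨by linarith [key, hsplit], by linarith⟩, ?_⟩
  intro hpos _
  by_contra hc
  push_neg at hc
  have hz : ∫ x in S, r x * (1 - 2 * η x) ∂P = 0 := le_antisymm (by linarith) hnonneg
  have hae : 0 ≤ᵐ[P.restrict S] fun x => r x * (1 - 2 * η x) := by
    refine (ae_restrict_iff' hSm).mpr (ae_of_all _ fun x hx => ?_)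
    have := hSη x hx
    have := (hr01 x).1
    simp only [Pi.zero_apply]
    nlinarith
  have haez : (fun x => r x * (1 - 2 * η x)) =ᵐ[P.restrict S] 0 :=
    (integral_eq_zero_iff_of_nonneg_ae hae hi3.restrict).mp hz
  have hrz : r =ᵐ[P.restrict S] 0 := by
    filter_upwards [haez, ae_restrict_mem hSm] with x hx1 hx2
    have hηx := hSη x hx2
    have : 1 - 2 * η x > 0 := by linarith
    have := mul_eq_zero.mp hx1
    rcases this with h | h
    · exact h
    · linarith
  have : ∫ x in S, r x ∂P = 0 := by
    rw [integral_congr_ae hrz]; simp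
  linarith
end

section
/- In the compliant case, the risk with recourse of the Bayes-optimal classifier satisfies R_Q(f*) = (1/2)P(B=1, f*(X₀) = −1) − P(B=1, f*(X₀) = −1, Y = +1) + R_P(f*), and hence R_Q(f*) ≥ R_P(f*), with strict inequality if P(B=1, f*(X₀)=−1) > 0 and P(Y=+1|X₀) < 1/2 on a set of positive probability within {f* = −1, B=1}. -/
open Set MeasureTheory

lemma integrable_of_bound' {α : Type*} [MeasurableSpace α] (μ : Measure α) [IsFiniteMeasure μ]
    (g : α → ℝ) (hg : Measurable g) (C : ℝ) (h : ∀ x, |g x| ≤ C) : Integrable g μ :=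
  (integrable_const C).mono' hg.aestronglyMeasurable (Filter.Eventually.of_forall h)

/-- compliant case, Bayes-optimal classifier.  Points of the negative
class are mapped by `φ` to the decision boundary where `η ∘ φ = 1/2`.  Then
`R_Q = (1/2)·P(B=1,f=-1) - P(B=1,f=-1,Y=+1) + R_P ≥ R_P`, strictly when there is
positive probability of recourse in `{f = -1}` where `η < 1/2`. -/
theorem stmt_3 {α : Type*} [MeasurableSpace α] (P : Measure α) [IsProbabilityMeasure P]
    (η r : α → ℝ) (f : α → ℤ) (φ : α → α)
    (hη : Measurable η) (hr : Measurable r) (hf : Measurable f) (hφ : Measurable φ)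
    (hη01 : ∀ x, η x ∈ Set.Icc (0:ℝ) 1) (hr01 : ∀ x, r x ∈ Set.Icc (0:ℝ) 1)
    (hBayes : ∀ x, f x = if (1:ℝ)/2 ≤ η x then 1 else -1)
    (hbd : ∀ x, f x = -1 → η (φ x) = 1/2)
    (RP RQ : ℝ)
    (hRP : RP = ∫ x, (if f x = 1 then 1 - η x else η x) ∂P)
    (hRQ : RQ = ∫ x, (if f x = 1 then 1 - η x
        else r x * (1 - η (φ x)) + (1 - r x) * η x) ∂P) :
    (RQ = (1/2) * (∫ x in {x | f x = -1}, r x ∂P)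
          - (∫ x in {x | f x = -1}, r x * η x ∂P) + RP
      ∧ RP ≤ RQ)
    ∧ ((0 < ∫ x in {x | f x = -1 ∧ η x < 1/2}, r x ∂P) → RP < RQ) := by
  classical
  set s : Set α := {x | f x = -1} with hs_def
  have hs : MeasurableSet s := hf (measurableSet_singleton (-1))
  -- basic facts
  have hηlt : ∀ x, f x = -1 → η x < 1/2 := by
    intro x hx
    by_contra h
    push_neg at h
    rw [hBayes x, if_pos h] at hx
    norm_num at hx
  have hne1 : ∀ x, f x ≠ 1 → f x = -1 := by
    intro x hx
    rw [hBayes x] at hx ⊢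
    split at hx <;> simp_all
  -- the strict-condition set equals s
  have hset : {x | f x = -1 ∧ η x < 1/2} = s := by
    ext x
    simp only [hs_def, Set.mem_setOf_eq]
    exact ⟨fun h => h.1, fun h => ⟨h, hηlt x h⟩⟩
  -- integrands
  set gP : α → ℝ := fun x => if f x = 1 then 1 - η x else η x with hgP_def
  set gQ : α → ℝ := fun x => if f x = 1 then 1 - η x
      else r x * (1 - η (φ x)) + (1 - r x) * η x with hgQ_def
  have hηb : ∀ x, |η x| ≤ 1 := fun x => abs_le.2 ⟨by linarith [(hη01 x).1], (hη01 x).2⟩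
  have hrb : ∀ x, |r x| ≤ 1 := fun x => abs_le.2 ⟨by linarith [(hr01 x).1], (hr01 x).2⟩
  have hmf1 : MeasurableSet {x | f x = 1} := hf (measurableSet_singleton 1)
  have hgPm : Measurable gP := Measurable.ite hmf1 (measurable_const.sub hη) hη
  have hgQm : Measurable gQ := Measurable.ite hmf1 (measurable_const.sub hη)
      ((hr.mul (measurable_const.sub (hη.comp hφ))).add ((measurable_const.sub hr).mul hη))
  have hgPi : Integrable gP P := by
    refine integrable_of_bound' P gP hgPm 1 fun x => ?_
    simp only [hgP_def]
    have h1 := hη01 x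
    by_cases h : f x = 1 <;> simp only [h, if_true, if_false, if_pos, if_neg] <;>
      rw [abs_le] <;> constructor <;> linarith [h1.1, h1.2]
  have hgQi : Integrable gQ P := by
    refine integrable_of_bound' P gQ hgQm 2 fun x => ?_
    simp only [hgQ_def]
    have h1 := hη01 x; have h2 := hr01 x; have h3 := hη01 (φ x)
    by_cases h : f x = 1 <;> simp only [h, if_true, if_false, if_pos, if_neg] <;>
      rw [abs_le] <;> constructor <;>
      nlinarith [h1.1, h1.2, h2.1, h2.2, h3.1, h3.2]
  -- difference function
  set g : α → ℝ := fun x => if f x = 1 then 0 else r x * (1/2 - η x) with hg_def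
  have hgm : Measurable g := Measurable.ite hmf1 measurable_const
      (hr.mul (measurable_const.sub hη))
  have hdiff : ∀ x, gQ x - gP x = g x := by
    intro x
    simp only [hgQ_def, hgP_def, hg_def]
    split
    · ring
    · next h =>
      have hx := hne1 x h
      rw [hbd x hx]
      ring
  -- g is indicator of s
  have hgind : g = s.indicator (fun x => r x * (1/2 - η x)) := by
    ext x
    simp only [hg_def, Set.indicator_apply, hs_def, Set.mem_setOf_eq]
    by_cases h : f x = 1
    · rw [if_pos h, if_neg (by rw [h]; norm_num)]
    · rw [if_neg h, if_pos (hne1 x h)]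
  have hginti : ∫ x, g x ∂P = ∫ x in s, r x * (1/2 - η x) ∂P := by
    rw [hgind, integral_indicator hs]
  -- key identity
  have hri : Integrable r (P.restrict s) := integrable_of_bound' _ r hr 1 hrb
  have hrηi : Integrable (fun x => r x * η x) (P.restrict s) :=
    integrable_of_bound' _ _ (hr.mul hη) 1
      (fun x => by rw [abs_mul]; exact mul_le_one₀ (hrb x) (abs_nonneg _) (hηb x))
  have hsplit : ∫ x in s, r x * (1/2 - η x) ∂P
      = (1/2) * (∫ x in s, r x ∂P) - (∫ x in s, r x * η x ∂P) := by
    have : ∀ x, r x * (1/2 - η x) = (1/2) * r x - r x * η x := fun x => by ring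
    simp_rw [this]
    rw [integral_sub (hri.const_mul _) hrηi, integral_const_mul]
  have hkey : RQ = RP + ∫ x in s, r x * (1/2 - η x) ∂P := by
    have h1 := integral_sub hgQi hgPi
    simp_rw [hdiff] at h1
    rw [hRQ, hRP, ← hginti]
    linarith [h1]
  have hnn : 0 ≤ ∫ x in s, r x * (1/2 - η x) ∂P := by
    refine setIntegral_nonneg hs fun x hx => ?_
    have h1 := hηlt x hx
    have h2 := (hr01 x).1
    nlinarith [h1, h2]
  refine ⟨⟨by rw [hkey, hsplit]; ring, by rw [hkey]; linarith⟩, ?_⟩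
  -- strict case
  intro hpos
  rw [hset] at hpos
  rw [hkey]
  have hposg : 0 < ∫ x in s, r x * (1/2 - η x) ∂P := by
    have hrnn : 0 ≤ᵐ[P.restrict s] r := Filter.Eventually.of_forall fun x => (hr01 x).1
    have hsupp : 0 < (P.restrict s) (Function.support r) :=
      (integral_pos_iff_support_of_nonneg_ae hrnn hri).1 hpos
    have hgnn : 0 ≤ᵐ[P.restrict s] fun x => r x * (1/2 - η x) := by
      refine (ae_restrict_iff' hs).2 (Filter.Eventually.of_forall fun x hx => ?_)
      have h1 := hηlt x hx
      have h2 := (hr01 x).1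
      show (0:ℝ) ≤ r x * (1/2 - η x)
      nlinarith [h1, h2]
    have hsub : Function.support r ∩ s ⊆ Function.support (fun x => r x * (1/2 - η x)) := by
      rintro x ⟨hxr, hxs⟩
      have h1 := hηlt x hxs
      have h2 : r x ≠ 0 := hxr
      simp only [Function.mem_support]
      intro h
      rcases mul_eq_zero.1 h with h' | h'
      · exact h2 h'
      · linarith
    have hsub2 : Function.support r ∩ s ⊆ (Function.support fun x => r x * (1/2 - η x)) ∩ s :=
      fun x hx => ⟨hsub hx, hx.2⟩
    have hgi : Integrable (fun x => r x * (1/2 - η x)) (P.restrict s) :=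
      integrable_of_bound' _ _ (hr.mul (measurable_const.sub hη)) 1
        (fun x => by
          rw [abs_mul]
          refine mul_le_one₀ (hrb x) (abs_nonneg _) ?_
          have h1 := hη01 x; rw [abs_le]; constructor <;> linarith [h1.1, h1.2])
    have hsupp2 : 0 < (P.restrict s) (Function.support fun x => r x * (1/2 - η x)) := by
      rw [Measure.restrict_apply' hs]
      calc 0 < (P.restrict s) (Function.support r) := hsupp
        _ = P (Function.support r ∩ s) := Measure.restrict_apply' hs
        _ ≤ _ := measure_mono hsub2
    exact (integral_pos_iff_support_of_nonneg_ae hgnn hgi).2 hsupp2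
  linarith
end

section
/- In the compliant case with F invariant under recourse, let f̂ minimize R_P over F, let f' ∈ F be the unique classifier with f'(φ_{f'}(x₀)) = f̂(x₀) for all x₀, and define Δ = E_{(X₀,Y)∼P}[ℓ(f̂(X₀),Y)] − E_{(X₀,Y)∼Q_{f'}}[ℓ(f̂(X₀),Y)]. Then min_{f ∈ F} R_{Q_f}(f) ≤ R_{Q_{f'}}(f') = min_{f ∈ F} R_P(f) − Δ. -/
open Set MeasureTheory

/-- strategizing in the compliant case.  With `fhat` a minimizer of
`R_P` over `F`, `f'` the compensating classifier and `Δ` the resulting change in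
risk, `min_{f∈F} R_{Q_f}(f) ≤ R_{Q_{f'}}(f') = min_{f∈F} R_P(f) - Δ`. -/
theorem stmt_8 {α : Type*} [MeasurableSpace α] (P : Measure α) [IsProbabilityMeasure P]
    (η : α → ℝ) (hη01 : ∀ x, η x ∈ Set.Icc (0:ℝ) 1)
    (F : Set (α → ℤ)) (hFne : F.Nonempty)
    (φr : (α → ℤ) → α → α)
    (hinv : ∀ f ∈ F, ∃! f' : α → ℤ, f' ∈ F ∧ ∀ x, f' (φr f' x) = f x)
    (RP RQ : (α → ℤ) → ℝ)
    (hRP : ∀ f, RP f = ∫ x, (if f x = 1 then 1 - η x else η x) ∂P)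
    (hRQ : ∀ f, RQ f = ∫ x, (if f (φr f x) = 1 then 1 - η (φr f x) else η (φr f x)) ∂P)
    (fhat f' : α → ℤ)
    (hfhat : fhat ∈ F ∧ ∀ f ∈ F, RP fhat ≤ RP f)
    (hf' : f' ∈ F ∧ ∀ x, f' (φr f' x) = fhat x)
    (Δ : ℝ)
    (hΔ : Δ = RP fhat
        - ∫ x, (if fhat x = 1 then 1 - η (φr f' x) else η (φr f' x)) ∂P) :
    sInf (RQ '' F) ≤ RQ f' ∧ RQ f' = sInf (RP '' F) - Δ := by
  have hbdd : BddBelow (RQ '' F) := by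
    refine ⟨0, ?_⟩
    rintro _ ⟨f, _, rfl⟩
    rw [hRQ]
    apply integral_nonneg
    intro x
    have := hη01 (φr f x)
    simp only [Set.mem_Icc] at this
    simp only [Pi.zero_apply]
    split <;> linarith [this.1, this.2]
  constructor
  · exact csInf_le hbdd ⟨f', hf'.1, rfl⟩
  · have h1 : RQ f' = ∫ x, (if fhat x = 1 then 1 - η (φr f' x) else η (φr f' x)) ∂P := by
      rw [hRQ]
      congr 1
      ext x
      rw [hf'.2 x]
    have h2 : sInf (RP '' F) = RP fhat := by
      apply le_antisymm
      · exact csInf_le ⟨RP fhat, by rintro _ ⟨f, hf, rfl⟩; exact hfhat.2 f hf⟩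
          ⟨fhat, hfhat.1, rfl⟩
      · exact le_csInf (hFne.image RP) (by rintro _ ⟨f, hf, rfl⟩; exact hfhat.2 f hf)
    rw [h1, h2, hΔ]
    ring
end

section
/- For linear classifiers f_{θ,θ₀}(x) = sign(xᵀθ + θ₀) (with sign(z) = +1 for z ≥ 0, −1 otherwise) and the recourse map that assigns class +1 to any point within Euclidean distance D > 0 of the decision boundary of the deployed classifier, the class of linear classifiers is invariant under recourse: setting θ₀' = θ₀ − D‖θ‖, for all x₀ ∈ ℝ^d one has f_{θ,θ₀'}(φ(f_{θ,θ₀'}, x₀)) = f_{θ,θ₀}(x₀). -/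
open Set
open scoped RealInnerProductSpace

/-- linear classifiers are invariant under recourse.  With
`θ₀' = θ₀ - D‖θ‖`, recourse with the shifted classifier (assigning +1 to any
point within signed distance `D` of its boundary) reproduces the original
classifier: `(-⟪x₀,θ⟫ - θ₀')/‖θ‖ ≤ D ↔ x₀ᵀθ + θ₀ ≥ 0`, i.e.
`f_{θ,θ₀'}(φ(f_{θ,θ₀'},x₀)) = f_{θ,θ₀}(x₀)`. -/
theorem stmt_9 {d : ℕ} (θ : EuclideanSpace ℝ (Fin d)) (hθ : θ ≠ 0)
    (θ₀ D : ℝ) (hD : 0 < D) (θ₀' : ℝ) (hθ₀' : θ₀' = θ₀ - D * ‖θ‖) :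
    ∀ x₀ : EuclideanSpace ℝ (Fin d),
      ((-⟪x₀, θ⟫ - θ₀') / ‖θ‖ ≤ D ↔ 0 ≤ ⟪x₀, θ⟫ + θ₀)
      ∧ ((if (-⟪x₀, θ⟫ - θ₀') / ‖θ‖ ≤ D then (1:ℤ) else -1)
          = (if 0 ≤ ⟪x₀, θ⟫ + θ₀ then (1:ℤ) else -1)) := by
  intro x₀
  have hn : (0:ℝ) < ‖θ‖ := norm_pos_iff.mpr hθ
  have key : (-⟪x₀, θ⟫ - θ₀') / ‖θ‖ ≤ D ↔ 0 ≤ ⟪x₀, θ⟫ + θ₀ := by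
    rw [div_le_iff₀ hn, hθ₀']
    constructor <;> intro h <;> nlinarith
  exact ⟨key, by simp only [key]⟩
end

section
/- In the two-Gaussian linear classification example, the quantity Δ of Definition (compliant strategizing) is strictly positive: for the compensating classifier f' = f_{θ, θ₀ − D‖θ‖} and x₀ in the band A = {x : 0 ≤ xᵀθ + θ₀ < D‖θ‖}, projecting x₀ onto the decision boundary of f' strictly increases θᵀx + θ₀, and since t ↦ 1/(1+e^t) is strictly decreasing, P(Y=−1 | X₀ = φ_{f'}(x₀)) < P(Y=−1 | X₀ = x₀) for each such x₀; hence Δ > 0 whenever P(X₀ ∈ A) > 0. -/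
open Set MeasureTheory
open scoped RealInnerProductSpace

/-- in the two-Gaussian linear example, for each `x₀` in the band
`A`, projecting onto the boundary of the compensating classifier strictly
increases `θᵀx + θ₀`, hence strictly decreases the posterior
`P(Y=-1|X₀=x) = 1/(1+exp(θᵀx+θ₀))`; consequently `Δ > 0` whenever `P(A) > 0`. -/
theorem stmt_18 {d : ℕ}
    (P : Measure (EuclideanSpace ℝ (Fin d))) [IsProbabilityMeasure P]
    (θ : EuclideanSpace ℝ (Fin d)) (hθ : θ ≠ 0) (θ₀ D : ℝ) (hD : 0 < D)
    (pm : EuclideanSpace ℝ (Fin d) → ℝ)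
    (hpm : ∀ x, pm x = 1 / (1 + Real.exp (⟪θ, x⟫ + θ₀)))
    (A : Set (EuclideanSpace ℝ (Fin d)))
    (hA : A = {x | 0 ≤ ⟪θ, x⟫ + θ₀ ∧ ⟪θ, x⟫ + θ₀ < D * ‖θ‖})
    (θ₀' : ℝ) (hθ₀' : θ₀' = θ₀ - D * ‖θ‖)
    (φ' : EuclideanSpace ℝ (Fin d) → EuclideanSpace ℝ (Fin d))
    (hφ' : ∀ x, φ' x = x - ((⟪x, θ⟫ + θ₀') / ‖θ‖ ^ 2) • θ)
    (Δ : ℝ) (hΔ : Δ = ∫ x in A, (pm x - pm (φ' x)) ∂P) :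
    (∀ x ∈ A, ⟪θ, x⟫ + θ₀ < ⟪θ, φ' x⟫ + θ₀ ∧ pm (φ' x) < pm x)
    ∧ (0 < P A → 0 < Δ) := by
  have hθn : (0:ℝ) < ‖θ‖ := norm_pos_iff.mpr hθ
  -- key: the inner product at φ' x
  have hkey : ∀ x, ⟪θ, φ' x⟫ + θ₀ = D * ‖θ‖ := by
    intro x
    rw [hφ' x, inner_sub_right, real_inner_smul_right, real_inner_self_eq_norm_sq,
      real_inner_comm x θ]
    have h2 : ‖θ‖ ^ 2 ≠ 0 := by positivity
    field_simp [hθ₀']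
    rw [hθ₀']; ring
  have hmono : ∀ a b : ℝ, a < b →
      1 / (1 + Real.exp b) < 1 / (1 + Real.exp a) := by
    intro a b hab
    apply one_div_lt_one_div_of_lt
    · positivity
    · have := Real.exp_lt_exp.mpr hab; linarith
  have hmain : ∀ x ∈ A, ⟪θ, x⟫ + θ₀ < ⟪θ, φ' x⟫ + θ₀ ∧ pm (φ' x) < pm x := by
    intro x hx
    rw [hA] at hx
    have hlt : ⟪θ, x⟫ + θ₀ < ⟪θ, φ' x⟫ + θ₀ := by rw [hkey x]; exact hx.2
    refine ⟨hlt, ?_⟩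
    rw [hpm, hpm]
    exact hmono _ _ hlt
  refine ⟨hmain, ?_⟩
  intro hPA
  -- measurability / continuity
  have hcont_pm : Continuous pm := by
    have : Continuous fun x : EuclideanSpace ℝ (Fin d) =>
        1 / (1 + Real.exp (⟪θ, x⟫ + θ₀)) := by
      apply Continuous.div continuous_const
      · exact continuous_const.add (((continuous_const.inner continuous_id).add
          continuous_const).rexp)
      · intro x
        have := Real.exp_pos (⟪θ, x⟫ + θ₀)
        positivity
    simpa [← hpm] using (funext hpm ▸ this)
  have hcont_φ : Continuous φ' := by
    have : Continuous fun x : EuclideanSpace ℝ (Fin d) =>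
        x - ((⟪x, θ⟫ + θ₀') / ‖θ‖ ^ 2) • θ := by
      apply continuous_id.sub
      fun_prop
    simpa [← hφ'] using (funext hφ' ▸ this)
  set g : EuclideanSpace ℝ (Fin d) → ℝ := fun x => pm x - pm (φ' x) with hg
  have hcont_g : Continuous g := hcont_pm.sub (hcont_pm.comp hcont_φ)
  have hAmeas : MeasurableSet A := by
    rw [hA]
    have hc : Continuous fun x : EuclideanSpace ℝ (Fin d) => ⟪θ, x⟫ + θ₀ :=
      (continuous_const.inner continuous_id).add continuous_const
    exact (measurableSet_le measurable_const hc.measurable).inter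
      (measurableSet_lt hc.measurable measurable_const)
  have hpos : ∀ x ∈ A, 0 < g x := fun x hx => sub_pos.mpr (hmain x hx).2
  have hbound : ∀ x, |g x| ≤ 2 := by
    intro x
    have h1 : ∀ y, 0 < pm y ∧ pm y ≤ 1 := by
      intro y
      rw [hpm]
      have he := Real.exp_pos (⟪θ, y⟫ + θ₀)
      constructor
      · positivity
      · rw [div_le_one (by positivity)]; linarith
    have := h1 x; have := h1 (φ' x)
    rw [abs_le]; constructor <;> simp only [hg] <;> nlinarith [(h1 x).1, (h1 x).2,
      (h1 (φ' x)).1, (h1 (φ' x)).2]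
  have hint : IntegrableOn g A P := by
    exact Measure.integrableOn_of_bounded (measure_ne_top _ _)
      hcont_g.aestronglyMeasurable (Filter.Eventually.of_forall fun x =>
        by simpa using hbound x)
  have hnn : 0 ≤ᵐ[P.restrict A] g := by
    filter_upwards [ae_restrict_mem hAmeas] with x hx
    exact (hpos x hx).le
  rw [hΔ]
  rw [setIntegral_pos_iff_support_of_nonneg_ae hnn hint]
  have hsub : A ⊆ Function.support g ∩ A := fun x hx =>
    ⟨fun h => (hpos x hx).ne' h, hx⟩
  exact lt_of_lt_of_le hPA (measure_mono hsub)
end
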